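/- Let A be a finite-dimensional K-algebra, let Z be a finite-dimensional A-module having no nonzero projective direct summand, let X be a finite-dimensional A-module, and let f : Z → X be a nonzero morphism. Then the induced epimorphism f' : Z → im f does not factor through any projective A-module; that is, there is no projective module P with morphisms g : Z → P and h : P → im f such that h ∘ g = f'. -/

import Mathlib

open CategoryTheory

universe u

noncomputable instance (A : Type u) [Ring A] : HasDerivedCategory.{u+1} (ModuleCat.{u} A) :=
  HasDerivedCategory.standard _

instance (A : Type u) [Ring A] : HasExt.{u+1} (ModuleCat.{u} A) :=
  hasExt_of_hasDerivedCategory _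

variable (A : Type u) [Ring A]

/-- The category `mod A` of finite-dimensional (equivalently, finitely generated)
`A`-modules, viewed as the set of objects of `ModuleCat A` that are finite over `A`. -/
def fdMod : Set (ModuleCat.{u} A) := {M | Module.Finite A M}

/-- `f : X ⟶ M` is a right `𝒳`-approximation of `M`. -/
def IsRightApprox (𝒳 : Set (ModuleCat.{u} A)) {X M : ModuleCat.{u} A} (f : X ⟶ M) : Prop :=
  X ∈ 𝒳 ∧ ∀ X' ∈ 𝒳, ∀ g : X' ⟶ M, ∃ h : X' ⟶ X, h ≫ f = g

/-- `f : M ⟶ X` is a left `𝒳`-approximation of `M`. -/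
def IsLeftApprox (𝒳 : Set (ModuleCat.{u} A)) {M X : ModuleCat.{u} A} (f : M ⟶ X) : Prop :=
  X ∈ 𝒳 ∧ ∀ X' ∈ 𝒳, ∀ g : M ⟶ X', ∃ h : X ⟶ X', f ≫ h = g

/-- `Y` is a direct summand of `P`. -/
def IsSummand (Y P : ModuleCat.{u} A) : Prop :=
  ∃ Y' : ModuleCat.{u} A, Nonempty (ModuleCat.of A (Y × Y') ≅ P)

/-- A full subcategory closed under isomorphisms, finite direct sums and direct summands. -/
def ClosedSubcat (𝒳 : Set (ModuleCat.{u} A)) : Prop :=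
  (∀ M N : ModuleCat.{u} A, Nonempty (M ≅ N) → M ∈ 𝒳 → N ∈ 𝒳) ∧
  (∀ M N : ModuleCat.{u} A, M ∈ 𝒳 → N ∈ 𝒳 → ModuleCat.of A (M × N) ∈ 𝒳) ∧
  (∀ M N : ModuleCat.{u} A, ModuleCat.of A (M × N) ∈ 𝒳 → M ∈ 𝒳)

/-- `𝒞` is a 2-cluster-tilting subcategory of `mod A`. -/
def IsClusterTilting₂ (𝒞 : Set (ModuleCat.{u} A)) : Prop :=
  𝒞 ⊆ fdMod A ∧ ClosedSubcat A 𝒞 ∧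
  (∀ M ∈ fdMod A, ∃ (X : ModuleCat.{u} A) (f : X ⟶ M), IsRightApprox A 𝒞 f) ∧
  (∀ M ∈ fdMod A, ∃ (X : ModuleCat.{u} A) (f : M ⟶ X), IsLeftApprox A 𝒞 f) ∧
  (∀ X ∈ fdMod A, (X ∈ 𝒞 ↔ ∀ C ∈ 𝒞, Subsingleton (Abelian.Ext C X 1))) ∧
  (∀ X ∈ fdMod A, (X ∈ 𝒞 ↔ ∀ C ∈ 𝒞, Subsingleton (Abelian.Ext X C 1)))

/-- `𝒳` is 2-contravariantly finite in `𝒞`. -/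
def Is2ContraFF (𝒞 𝒳 : Set (ModuleCat.{u} A)) : Prop :=
  ∀ M ∈ 𝒞, ∃ (X₁ X₂ : ModuleCat.{u} A) (f : X₁ ⟶ M) (g : X₂ ⟶ X₁),
    X₂ ∈ 𝒳 ∧ IsRightApprox A 𝒳 f ∧ g ≫ f = 0 ∧
    (∀ C ∈ 𝒞, ∀ u : C ⟶ M, ∃ v : C ⟶ X₁, v ≫ f = u) ∧
    (∀ C ∈ 𝒞, ∀ v : C ⟶ X₁, v ≫ f = 0 → ∃ w : C ⟶ X₂, w ≫ g = v)

/-- `𝒳` is 2-covariantly finite in `𝒞`. -/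
def Is2CoFF (𝒞 𝒳 : Set (ModuleCat.{u} A)) : Prop :=
  ∀ M ∈ 𝒞, ∃ (X₁ X₂ : ModuleCat.{u} A) (f : M ⟶ X₁) (g : X₁ ⟶ X₂),
    X₂ ∈ 𝒳 ∧ IsLeftApprox A 𝒳 f ∧ f ≫ g = 0 ∧
    (∀ C ∈ 𝒞, ∀ u : M ⟶ C, ∃ v : X₁ ⟶ C, f ≫ v = u) ∧
    (∀ C ∈ 𝒞, ∀ v : X₁ ⟶ C, f ≫ v = 0 → ∃ w : X₂ ⟶ C, g ≫ w = v)

/-- `𝒳` is 2-functorially finite in `𝒞`. -/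
def Is2FF (𝒞 𝒳 : Set (ModuleCat.{u} A)) : Prop :=
  Is2ContraFF A 𝒞 𝒳 ∧ Is2CoFF A 𝒞 𝒳

/-- `(𝒯, 𝒻)` is a 2-functorially-finite torsion pair in `𝒞`. -/
def Is2FFTorsionPair (𝒞 𝒯 𝒻 : Set (ModuleCat.{u} A)) : Prop :=
  Is2FF A 𝒞 𝒯 ∧ Is2FF A 𝒞 𝒻 ∧
  (∀ T ∈ 𝒯, ∀ F ∈ 𝒻, ∀ f : T ⟶ F, f = 0) ∧
  𝒯 = {X | X ∈ 𝒞 ∧ ∀ F ∈ 𝒻, ∀ f : X ⟶ F, f = 0} ∧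
  𝒻 = {Y | Y ∈ 𝒞 ∧ ∀ T ∈ 𝒯, ∀ f : T ⟶ Y, f = 0}

/-- `Fac T` for a single module `T`: quotients of finite direct sums of copies of `T`. -/
def FacM (T : ModuleCat.{u} A) : Set (ModuleCat.{u} A) :=
  {N | ∃ (n : ℕ) (p : ModuleCat.of A (Fin n → T) ⟶ N), Function.Surjective p}

/-- `Fac 𝒳` for a class `𝒳`: quotients of modules in `𝒳`. -/
def FacSet (𝒳 : Set (ModuleCat.{u} A)) : Set (ModuleCat.{u} A) :=
  {N | ∃ X ∈ 𝒳, ∃ p : X ⟶ N, Function.Surjective p}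

/-- `Sub 𝒳` for a class `𝒳`: submodules of modules in `𝒳`. -/
def SubSet (𝒳 : Set (ModuleCat.{u} A)) : Set (ModuleCat.{u} A) :=
  {N | ∃ X ∈ 𝒳, ∃ i : N ⟶ X, Function.Injective i}

/-- `add T`: direct summands of finite direct sums of copies of `T`. -/
def addM (T : ModuleCat.{u} A) : Set (ModuleCat.{u} A) :=
  {N | ∃ n : ℕ, IsSummand A N (ModuleCat.of A (Fin n → T))}

/-- If `Z` has no nonzero projective direct summand and `f : Z → X`
is a nonzero morphism, then the corestriction `f' : Z → im f` does not factor through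
any projective module. -/
theorem stmt14 (K : Type u) [Field K] [Algebra K A] [FiniteDimensional K A]
    (Z X : ModuleCat.{u} A) (hZ : Z ∈ fdMod A) (hX : X ∈ fdMod A)
    (hnoproj : ∀ P : ModuleCat.{u} A, IsSummand A P Z → Module.Projective A P →
      Subsingleton P)
    (f : Z ⟶ X) (hf : f ≠ 0) :
    ¬ ∃ (P : ModuleCat.{u} A) (_ : Module.Projective A P)
        (g : Z ⟶ P) (h : P ⟶ ModuleCat.of A (LinearMap.range (f.hom : Z →ₗ[A] X))),
        ∀ z : Z, h (g z) = LinearMap.rangeRestrict (f.hom : Z →ₗ[A] X) z := by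
  rintro ⟨P, hP, g, h, hcomm⟩
  haveI : IsArtinianRing A := IsArtinianRing.of_finite K A
  haveI : IsNoetherianRing A := isNoetherian_of_tower K inferInstance
  haveI : Module.Finite A Z := hZ
  haveI : IsArtinian A Z := inferInstance
  haveI : IsNoetherian A Z := inferInstance
  set f' : Z →ₗ[A] LinearMap.range (f.hom : Z →ₗ[A] X) :=
    LinearMap.rangeRestrict (f.hom : Z →ₗ[A] X) with hf'
  have hsurj : Function.Surjective f' := LinearMap.surjective_rangeRestrict _
  obtain ⟨k, hk⟩ := Module.projective_lifting_property f' (h.hom : P →ₗ[A] _) hsurj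
  set e : Module.End A Z := (k : P →ₗ[A] Z) ∘ₗ (g.hom : Z →ₗ[A] P) with he
  have hke : ∀ p : P, f' (k p) = h p := fun p => congrFun (congrArg DFunLike.coe hk) p
  have hfe1 : ∀ z, f' (e z) = f' z := fun z => by
    simpa [he, hke (g z)] using hcomm z
  have hfe : ∀ (j : ℕ) (z : Z), f' ((e ^ j) z) = f' z := by
    intro j
    induction j with
    | zero => intro z; simp
    | succ n ih =>
      intro z
      rw [pow_succ, Module.End.mul_apply, ih, hfe1]
  -- Fitting decomposition
  obtain ⟨n, hn⟩ := Filter.eventually_atTop.mp e.eventually_isCompl_ker_pow_range_pow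
  obtain ⟨m, hm⟩ := IsArtinian.monotone_stabilizes e.iterateRange
  set N : ℕ := n + m + 1 with hN
  have hcompl : IsCompl (LinearMap.ker (e ^ N)) (LinearMap.range (e ^ N)) := hn N (by omega)
  have hrange : LinearMap.range (e ^ N) = LinearMap.range (e ^ (N + N)) := by
    have h1 := hm N (by omega)
    have h2 := hm (N + N) (by omega)
    exact (h1.symm.trans h2 : _)
  set W : Submodule A Z := LinearMap.range (e ^ N) with hW
  set ι : W →ₗ[A] Z := W.subtype with hι
  set π : Z →ₗ[A] W := W.linearProjOfIsCompl _ hcompl.symm with hπ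
  have hπW : ∀ x : W, π (x : Z) = x := fun x =>
    Submodule.linearProjOfIsCompl_apply_left hcompl.symm x
  set θ : W →ₗ[A] W := π ∘ₗ (e ^ N) ∘ₗ ι with hθ
  have hθap : ∀ w : W, θ w = ⟨(e ^ N) (w : Z), LinearMap.mem_range_self _ _⟩ := by
    intro w
    simp only [hθ, LinearMap.comp_apply, hι, Submodule.subtype_apply]
    exact hπW ⟨(e ^ N) (w : Z), LinearMap.mem_range_self _ _⟩
  have hθinj : Function.Injective θ := by
    intro w₁ w₂ hw
    rw [← sub_eq_zero, ← map_sub] at hw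
    have h0 : (e ^ N) ((w₁ - w₂ : W) : Z) = 0 := by
      have := hθap (w₁ - w₂)
      rw [hw] at this
      exact congrArg Subtype.val this.symm
    have hz : ((w₁ - w₂ : W) : Z) = 0 :=
      Submodule.disjoint_def.mp hcompl.disjoint _ (LinearMap.mem_ker.mpr h0) (w₁ - w₂).2
    have : w₁ - w₂ = 0 := Subtype.ext hz
    rwa [sub_eq_zero] at this
  have hθsurj : Function.Surjective θ := by
    intro w
    obtain ⟨z, hz⟩ : (w : Z) ∈ LinearMap.range (e ^ (N + N)) := hrange ▸ w.2
    refine ⟨⟨(e ^ N) z, LinearMap.mem_range_self _ _⟩, Subtype.ext ?_⟩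
    rw [hθap]
    show (e ^ N) ((e ^ N) z) = (w : Z)
    rw [← Module.End.mul_apply, ← pow_add]
    exact hz
  set θe : W ≃ₗ[A] W := LinearEquiv.ofBijective θ ⟨hθinj, hθsurj⟩ with hθe
  -- W is a direct summand of P, hence projective
  set α : W →ₗ[A] P := (g.hom : Z →ₗ[A] P) ∘ₗ (e ^ (n + m)) ∘ₗ ι with hα
  set β : P →ₗ[A] W := π ∘ₗ (k : P →ₗ[A] Z) with hβ
  have hβα : ∀ w : W, β (α w) = θ w := by
    intro w
    have : k ((g.hom : Z →ₗ[A] P) ((e ^ (n + m)) (ι w))) = (e ^ N) (ι w) := by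
      show ((k : P →ₗ[A] Z) ∘ₗ (g.hom : Z →ₗ[A] P)) ((e ^ (n + m)) (ι w)) = _
      rw [← he, hN, pow_succ']
      rfl
    simp only [hα, hβ, hθ, LinearMap.comp_apply, this]
  have hWproj : Module.Projective A W := by
    refine Module.Projective.of_split (α ∘ₗ (θe.symm : W →ₗ[A] W)) β ?_
    ext w
    simp only [LinearMap.comp_apply, LinearMap.id_apply, hβα]
    exact congrArg Subtype.val (θe.apply_symm_apply w)
  have hsummand : IsSummand A (ModuleCat.of A W) Z := by
    refine ⟨ModuleCat.of A (LinearMap.ker (e ^ N)), ⟨?_⟩⟩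
    exact (Submodule.prodEquivOfIsCompl W (LinearMap.ker (e ^ N))
      hcompl.symm).toModuleIso
  have hsub : Subsingleton W := hnoproj (ModuleCat.of A W) hsummand hWproj
  -- conclude f = 0, contradiction
  apply hf
  have hzero : ∀ z : Z, (e ^ N) z = 0 := by
    intro z
    have : (⟨(e ^ N) z, LinearMap.mem_range_self _ _⟩ : W) = 0 := Subsingleton.elim _ _
    exact congrArg Subtype.val this
  refine ModuleCat.hom_ext (LinearMap.ext fun z => ?_)
  have h1 : f' z = 0 := by
    rw [← hfe N z, hzero z, map_zero]
  have h2 : (f.hom : Z →ₗ[A] X) z = ((f' z : LinearMap.range (f.hom : Z →ₗ[A] X)) : X) := rfl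
  show (f.hom : Z →ₗ[A] X) z = 0
  rw [h2, h1]
  rfl
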